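/- Let φʳ be the vector with φʳ_j = 0 for 0 ≤ j ≤ N+1 and φʳ_{j+1/2} = (−1)^j for 0 ≤ j ≤ N (the resonant mode). Then φʳ satisfies both P2 spectral equations with eigenvalue Λ = 10, its discrete L²-norm satisfies ‖φʳ‖²_{h,0} = 8/15, and its discrete H¹-norm satisfies ‖φʳ‖²_{h,1} = (16/3)·(φʳ_{N+1/2}/h)² = 16/(3h²). -/

import Mathlib

open Real Finset

/-- Discrete H¹-seminorm squared of a P2 vector with nodal components `f`
and midpoint components `g`. -/
noncomputable def normH1sq (N : ℕ) (h : ℝ) (f g : ℕ → ℝ) : ℝ :=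
  (h / 6) * ∑ j ∈ Finset.range (N + 1),
    ((-(f (j + 1) - 4 * g j + 3 * f j) / h) ^ 2
      + 4 * ((f (j + 1) - f j) / h) ^ 2
      + ((f j - 4 * g j + 3 * f (j + 1)) / h) ^ 2)

/-- Discrete L²-norm squared of a P2 vector with nodal components `f`
and midpoint components `g`. -/
noncomputable def normH0sq (N : ℕ) (h : ℝ) (f g : ℕ → ℝ) : ℝ :=
  (h / 90) * ∑ j ∈ Finset.range (N + 1),
    (7 * (f j) ^ 2
      + 32 * ((3 / 8) * f j + (3 / 4) * g j - (1 / 8) * f (j + 1)) ^ 2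
      + 12 * (g j) ^ 2
      + 32 * (-(1 / 8) * f j + (3 / 4) * g j + (3 / 8) * f (j + 1)) ^ 2
      + 7 * (f (j + 1)) ^ 2)

theorem stmt_8 (N : ℕ) (hN : 1 ≤ N) (h : ℝ) (hh : h = 1 / ((N : ℝ) + 1))
    (φ : ℕ → ℝ) (hφ : ∀ j : ℕ, φ j = 0)
    (ψ : ℕ → ℝ) (hψ : ∀ j : ℕ, ψ j = (-1 : ℝ) ^ j) :
    (∀ j : ℕ, j ≤ N →
      -(8 / 3) * φ j + (16 / 3) * ψ j - (8 / 3) * φ (j + 1)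
        - 10 * ((1 / 15) * φ j + (8 / 15) * ψ j + (1 / 15) * φ (j + 1)) = 0) ∧
    (∀ j : ℕ, 1 ≤ j → j ≤ N →
      (1 / 3) * φ (j - 1) - (8 / 3) * ψ (j - 1) + (14 / 3) * φ j - (8 / 3) * ψ j
        + (1 / 3) * φ (j + 1)
        - 10 * (-(1 / 30) * φ (j - 1) + (1 / 15) * ψ (j - 1) + (4 / 15) * φ j
            + (1 / 15) * ψ j - (1 / 30) * φ (j + 1)) = 0) ∧
    normH0sq N h φ ψ = 8 / 15 ∧
    normH1sq N h φ ψ = (16 / 3) * (ψ N / h) ^ 2 ∧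
    normH1sq N h φ ψ = 16 / (3 * h ^ 2) := by
  have hh0 : h ≠ 0 := by
    rw [hh]; positivity
  have hsq : ∀ j : ℕ, ((-1 : ℝ) ^ j) ^ 2 = 1 := by
    intro j
    rw [← pow_mul, mul_comm, pow_mul]
    norm_num
  have hNh : ((N : ℝ) + 1) * h = 1 := by
    rw [hh]; field_simp
  have hH1 : normH1sq N h φ ψ = 16 / (3 * h ^ 2) := by
    unfold normH1sq
    have : ∀ j ∈ Finset.range (N + 1),
        ((-(φ (j + 1) - 4 * ψ j + 3 * φ j) / h) ^ 2
          + 4 * ((φ (j + 1) - φ j) / h) ^ 2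
          + ((φ j - 4 * ψ j + 3 * φ (j + 1)) / h) ^ 2) = 32 / h ^ 2 := by
      intro j _
      rw [hφ, hφ, hψ]
      field_simp
      rw [show (0 - 4 * (-1 : ℝ) ^ j + 0 * 3) ^ 2 = 16 * ((-1 : ℝ) ^ j) ^ 2 by ring, hsq]
      ring
    rw [Finset.sum_congr rfl this, Finset.sum_const, Finset.card_range,
      nsmul_eq_mul]
    push_cast
    field_simp
    nlinarith [hNh]
  refine ⟨?_, ?_, ?_, ?_, hH1⟩
  · intro j _
    rw [hφ, hφ, hψ]; ring
  · intro j hj _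
    obtain ⟨k, rfl⟩ := Nat.exists_eq_add_of_le hj
    have hk : 1 + k - 1 = k := by omega
    rw [hk, hφ, hφ, hφ, hψ, hψ, show 1 + k = k + 1 from by omega, pow_succ]
    ring
  · unfold normH0sq
    have : ∀ j ∈ Finset.range (N + 1),
        (7 * (φ j) ^ 2
          + 32 * ((3 / 8) * φ j + (3 / 4) * ψ j - (1 / 8) * φ (j + 1)) ^ 2
          + 12 * (ψ j) ^ 2
          + 32 * (-(1 / 8) * φ j + (3 / 4) * ψ j + (3 / 8) * φ (j + 1)) ^ 2
          + 7 * (φ (j + 1)) ^ 2) = 48 := by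
      intro j _
      rw [hφ, hφ, hψ]
      have := hsq j
      nlinarith [hsq j]
    rw [Finset.sum_congr rfl this, Finset.sum_const, Finset.card_range,
      nsmul_eq_mul]
    push_cast
    nlinarith [hNh]
  · rw [hH1, hψ, div_pow, hsq N]
    field_simp
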